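/- Let r be a real number. Define f(x,y) = (√(1 − 2√x) + √y)^(−2) on the open set U = {(x,y) ∈ ℝ² : 0 < x, 2√x < 1, 0 < y}. Then Φ := f^r satisfies both Horn differential equations of the Horn function H₄(r, r+1/2, 1/2, 1/2): (θ_x(θ_x − 1/2) − x(2θ_x + θ_y + r)(2θ_x + θ_y + r + 1))Φ = 0 and (θ_y(θ_y − 1/2) − y(2θ_x + θ_y + r)(θ_y + r + 1/2))Φ = 0 at every point of U. -/

import Mathlib

/-- Euler operator `θ_x = x·∂/∂x` on functions of two real variables. -/
noncomputable def thetaX (f : ℝ × ℝ → ℝ) : ℝ × ℝ → ℝ := fun p => p.1 * fderiv ℝ f p (1, 0)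

/-- Euler operator `θ_y = y·∂/∂y` on functions of two real variables. -/
noncomputable def thetaY (f : ℝ × ℝ → ℝ) : ℝ × ℝ → ℝ := fun p => p.2 * fderiv ℝ f p (0, 1)

/-- The first-order operator `a·θ_x + b·θ_y + c`. -/
noncomputable def eulerOp (a b c : ℝ) (f : ℝ × ℝ → ℝ) : ℝ × ℝ → ℝ :=
  fun p => a * thetaX f p + b * thetaY f p + c * f p

/-- `f(x,y) = (√(1 − 2√x) + √y)^(−2)`. -/
noncomputable def fFun (p : ℝ × ℝ) : ℝ :=
  (Real.sqrt (1 - 2 * Real.sqrt p.1) + Real.sqrt p.2) ^ (-2 : ℝ)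

/-! ### Auxiliary definitions -/

noncomputable def gF (p : ℝ × ℝ) : ℝ := Real.sqrt (1 - 2 * Real.sqrt p.1) + Real.sqrt p.2

noncomputable def lm (a b : ℝ) : ℝ × ℝ →L[ℝ] ℝ :=
  a • (ContinuousLinearMap.fst ℝ ℝ ℝ) + b • (ContinuousLinearMap.snd ℝ ℝ ℝ)

@[simp] lemma lm_apply (a b : ℝ) (v : ℝ × ℝ) : lm a b v = a * v.1 + b * v.2 := by
  simp [lm]

noncomputable def PhiF (r : ℝ) (q : ℝ × ℝ) : ℝ := gF q ^ (-2*r)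
noncomputable def T1f (r : ℝ) (q : ℝ × ℝ) : ℝ :=
  r * (Real.sqrt q.1 * (Real.sqrt (1 - 2 * Real.sqrt q.1)) ^ (-1:ℝ) * gF q ^ (-2*r-1))
noncomputable def T2f (r : ℝ) (q : ℝ × ℝ) : ℝ :=
  (-r) * (Real.sqrt q.2 * gF q ^ (-2*r-1))
noncomputable def PA1 (r : ℝ) (q : ℝ × ℝ) : ℝ :=
  r * gF q ^ (-2*r-1) / (Real.sqrt q.1 * Real.sqrt (1 - 2 * Real.sqrt q.1))
noncomputable def PA2 (r : ℝ) (q : ℝ × ℝ) : ℝ := -(r * gF q ^ (-2*r-1) / Real.sqrt q.2)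
noncomputable def E11 (r : ℝ) (q : ℝ × ℝ) : ℝ :=
  r * gF q ^ (-2*r-2) * (gF q / (2 * Real.sqrt q.1 * Real.sqrt (1 - 2*Real.sqrt q.1))
    + gF q / (2 * (Real.sqrt (1 - 2*Real.sqrt q.1))^3)
    + (2*r+1) / (2 * (Real.sqrt (1 - 2*Real.sqrt q.1))^2))
noncomputable def E12 (r : ℝ) (q : ℝ × ℝ) : ℝ :=
  -(r * (2*r+1) * Real.sqrt q.1 * gF q ^ (-2*r-2) /
    (2 * Real.sqrt q.2 * Real.sqrt (1 - 2*Real.sqrt q.1)))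
noncomputable def E21 (r : ℝ) (q : ℝ × ℝ) : ℝ :=
  -(r * (2*r+1) * Real.sqrt q.2 * gF q ^ (-2*r-2) /
    (2 * Real.sqrt q.1 * Real.sqrt (1 - 2*Real.sqrt q.1)))
noncomputable def E22 (r : ℝ) (q : ℝ × ℝ) : ℝ :=
  r * gF q ^ (-2*r-2) * ((2*r+1)/2 - gF q / (2 * Real.sqrt q.2))

section
variable (r : ℝ) {q : ℝ × ℝ}

lemma hasF_s (hx : 0 < q.1) :
    HasFDerivAt (fun q : ℝ × ℝ => Real.sqrt q.1) (lm (1/(2 * Real.sqrt q.1)) 0) q := by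
  have h := (hasFDerivAt_fst (p := q)).sqrt hx.ne'
  have he : ((1 / (2 * Real.sqrt q.1)) • (ContinuousLinearMap.fst ℝ ℝ ℝ)) =
      lm (1/(2 * Real.sqrt q.1)) 0 := ContinuousLinearMap.ext fun v => by simp [lm]
  rwa [he] at h

lemma hasF_t (hy : 0 < q.2) :
    HasFDerivAt (fun q : ℝ × ℝ => Real.sqrt q.2) (lm 0 (1/(2 * Real.sqrt q.2))) q := by
  have h := (hasFDerivAt_snd (p := q)).sqrt hy.ne'
  have he : ((1 / (2 * Real.sqrt q.2)) • (ContinuousLinearMap.snd ℝ ℝ ℝ)) =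
      lm 0 (1/(2 * Real.sqrt q.2)) := ContinuousLinearMap.ext fun v => by simp [lm]
  rwa [he] at h

lemma hasF_u (hx : 0 < q.1) (h1 : 2 * Real.sqrt q.1 < 1) :
    HasFDerivAt (fun q : ℝ × ℝ => Real.sqrt (1 - 2 * Real.sqrt q.1))
      (lm (-(1/(2 * Real.sqrt q.1 * Real.sqrt (1 - 2 * Real.sqrt q.1)))) 0) q := by
  have hs : (0:ℝ) < Real.sqrt q.1 := Real.sqrt_pos.2 hx
  have hu0 : (0:ℝ) < 1 - 2 * Real.sqrt q.1 := by linarith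
  have h2 : HasFDerivAt (fun q : ℝ × ℝ => 1 - 2 * Real.sqrt q.1)
      (-((2:ℝ) • lm (1/(2 * Real.sqrt q.1)) 0)) q := ((hasF_s hx).const_mul 2).const_sub 1
  have h3 := h2.sqrt hu0.ne'
  have he : (1 / (2 * Real.sqrt (1 - 2 * Real.sqrt q.1))) •
      (-((2:ℝ) • lm (1/(2 * Real.sqrt q.1)) 0)) =
      lm (-(1/(2 * Real.sqrt q.1 * Real.sqrt (1 - 2 * Real.sqrt q.1)))) 0 := by
    refine ContinuousLinearMap.ext fun v => ?_
    simp [lm]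
    field_simp
  rwa [he] at h3

lemma hasF_g (hx : 0 < q.1) (h1 : 2 * Real.sqrt q.1 < 1) (hy : 0 < q.2) :
    HasFDerivAt gF (lm (-(1/(2 * Real.sqrt q.1 * Real.sqrt (1 - 2 * Real.sqrt q.1))))
      (1/(2 * Real.sqrt q.2))) q := by
  have h := (hasF_u hx h1).add (hasF_t hy)
  have he : lm (-(1/(2 * Real.sqrt q.1 * Real.sqrt (1 - 2 * Real.sqrt q.1)))) 0 +
      lm 0 (1/(2 * Real.sqrt q.2)) =
      lm (-(1/(2 * Real.sqrt q.1 * Real.sqrt (1 - 2 * Real.sqrt q.1))))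
        (1/(2 * Real.sqrt q.2)) := ContinuousLinearMap.ext fun v => by simp [lm]
  rwa [he] at h

lemma gF_pos (hx : 0 < q.1) (h1 : 2 * Real.sqrt q.1 < 1) (hy : 0 < q.2) : 0 < gF q := by
  have hu : (0:ℝ) < Real.sqrt (1 - 2 * Real.sqrt q.1) := Real.sqrt_pos.2 (by linarith)
  have ht : (0:ℝ) < Real.sqrt q.2 := Real.sqrt_pos.2 hy
  unfold gF; linarith

lemma hasF_Phi (hx : 0 < q.1) (h1 : 2 * Real.sqrt q.1 < 1) (hy : 0 < q.2) :
    HasFDerivAt (PhiF r) (lm (PA1 r q) (PA2 r q)) q := by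
  have hg := gF_pos hx h1 hy
  have hs : (0:ℝ) < Real.sqrt q.1 := Real.sqrt_pos.2 hx
  have hu : (0:ℝ) < Real.sqrt (1 - 2 * Real.sqrt q.1) := Real.sqrt_pos.2 (by linarith)
  have ht : (0:ℝ) < Real.sqrt q.2 := Real.sqrt_pos.2 hy
  have h := (hasF_g hx h1 hy).rpow_const (p := -2*r) (Or.inl hg.ne')
  have he : ((-2*r) * gF q ^ (-2*r - 1)) •
      (lm (-(1/(2 * Real.sqrt q.1 * Real.sqrt (1 - 2 * Real.sqrt q.1))))
        (1/(2 * Real.sqrt q.2))) = lm (PA1 r q) (PA2 r q) := by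
    refine ContinuousLinearMap.ext fun v => ?_
    simp [PA1, PA2]
    field_simp
    ring
  rw [he] at h
  exact h

lemma hasF_T1 (hx : 0 < q.1) (h1 : 2 * Real.sqrt q.1 < 1) (hy : 0 < q.2) :
    HasFDerivAt (T1f r) (lm (E11 r q) (E12 r q)) q := by
  have hg := gF_pos hx h1 hy
  have hs : (0:ℝ) < Real.sqrt q.1 := Real.sqrt_pos.2 hx
  have hu : (0:ℝ) < Real.sqrt (1 - 2 * Real.sqrt q.1) := Real.sqrt_pos.2 (by linarith)
  have ht : (0:ℝ) < Real.sqrt q.2 := Real.sqrt_pos.2 hy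
  have hUi := (hasF_u hx h1).rpow_const (p := -1) (Or.inl hu.ne')
  have hG1 := (hasF_g hx h1 hy).rpow_const (p := -2*r-1) (Or.inl hg.ne')
  have h := (((hasF_s hx).mul hUi).mul hG1).const_mul r
  have he : (r:ℝ) • ((Real.sqrt q.1 * (Real.sqrt (1 - 2*Real.sqrt q.1)) ^ (-1:ℝ)) •
        (((-2*r-1) * gF q ^ (-2*r-1-1)) •
          lm (-(1/(2 * Real.sqrt q.1 * Real.sqrt (1 - 2 * Real.sqrt q.1))))
            (1/(2 * Real.sqrt q.2))) +
      gF q ^ (-2*r-1) •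
        (Real.sqrt q.1 • (((-1:ℝ) * Real.sqrt (1 - 2*Real.sqrt q.1) ^ ((-1:ℝ)-1)) •
            lm (-(1/(2 * Real.sqrt q.1 * Real.sqrt (1 - 2 * Real.sqrt q.1)))) 0) +
          (Real.sqrt (1 - 2*Real.sqrt q.1)) ^ (-1:ℝ) • lm (1/(2 * Real.sqrt q.1)) 0)) =
      lm (E11 r q) (E12 r q) := by
    have eg : gF q ^ (-2*r-1-1) = gF q ^ (-2*r-2) := by rw [show (-2*r-1-1) = -2*r-2 by ring]
    have eg1 : gF q ^ (-2*r-1) = gF q ^ (-2*r-2) * gF q := by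
      rw [show (-2*r-1) = (-2*r-2) + 1 by ring, Real.rpow_add hg, Real.rpow_one]
    have eu1 : (Real.sqrt (1 - 2*Real.sqrt q.1)) ^ (-1:ℝ) =
        (Real.sqrt (1 - 2*Real.sqrt q.1))⁻¹ := Real.rpow_neg_one _
    have eu2 : (Real.sqrt (1 - 2*Real.sqrt q.1)) ^ ((-1:ℝ)-1) =
        ((Real.sqrt (1 - 2*Real.sqrt q.1))^2)⁻¹ := by
      rw [show ((-1:ℝ)-1) = -(2:ℝ) by ring, Real.rpow_neg hu.le]
      norm_num [Real.rpow_natCast]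
    refine ContinuousLinearMap.ext fun v => ?_
    simp only [ContinuousLinearMap.add_apply, ContinuousLinearMap.smul_apply, lm_apply,
      smul_eq_mul, E11, E12]
    rw [eg, eg1, eu1, eu2]
    have hu' : Real.sqrt (1 - Real.sqrt q.1 * 2) ≠ 0 := by rw [mul_comm]; exact hu.ne'
    field_simp
    ring
  simp only [Pi.mul_apply] at h
  rw [he] at h
  exact h

lemma hasF_T2 (hx : 0 < q.1) (h1 : 2 * Real.sqrt q.1 < 1) (hy : 0 < q.2) :
    HasFDerivAt (T2f r) (lm (E21 r q) (E22 r q)) q := by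
  have hg := gF_pos hx h1 hy
  have hs : (0:ℝ) < Real.sqrt q.1 := Real.sqrt_pos.2 hx
  have hu : (0:ℝ) < Real.sqrt (1 - 2 * Real.sqrt q.1) := Real.sqrt_pos.2 (by linarith)
  have ht : (0:ℝ) < Real.sqrt q.2 := Real.sqrt_pos.2 hy
  have hG1 := (hasF_g hx h1 hy).rpow_const (p := -2*r-1) (Or.inl hg.ne')
  have h := ((hasF_t hy).mul hG1).const_mul (-r)
  have he : (-r:ℝ) • (Real.sqrt q.2 • (((-2*r-1) * gF q ^ (-2*r-1-1)) •
        lm (-(1/(2 * Real.sqrt q.1 * Real.sqrt (1 - 2 * Real.sqrt q.1))))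
          (1/(2 * Real.sqrt q.2))) +
      gF q ^ (-2*r-1) • lm 0 (1/(2 * Real.sqrt q.2))) = lm (E21 r q) (E22 r q) := by
    have eg : gF q ^ (-2*r-1-1) = gF q ^ (-2*r-2) := by rw [show (-2*r-1-1) = -2*r-2 by ring]
    have eg1 : gF q ^ (-2*r-1) = gF q ^ (-2*r-2) * gF q := by
      rw [show (-2*r-1) = (-2*r-2) + 1 by ring, Real.rpow_add hg, Real.rpow_one]
    refine ContinuousLinearMap.ext fun v => ?_
    simp only [ContinuousLinearMap.add_apply, ContinuousLinearMap.smul_apply, lm_apply,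
      smul_eq_mul, E21, E22]
    rw [eg, eg1]
    field_simp
    ring
  rw [he] at h
  exact h

lemma thetaX_Phi (hx : 0 < q.1) (h1 : 2 * Real.sqrt q.1 < 1) (hy : 0 < q.2) :
    thetaX (PhiF r) q = T1f r q := by
  have hs : (0:ℝ) < Real.sqrt q.1 := Real.sqrt_pos.2 hx
  have hu : (0:ℝ) < Real.sqrt (1 - 2 * Real.sqrt q.1) := Real.sqrt_pos.2 (by linarith)
  show q.1 * (fderiv ℝ (PhiF r) q) (1,0) = _
  rw [(hasF_Phi r hx h1 hy).fderiv]
  simp only [lm_apply]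
  norm_num
  unfold PA1 T1f
  rw [Real.rpow_neg_one]
  field_simp
  nth_rewrite 1 [(Real.mul_self_sqrt hx.le).symm]
  ring

lemma thetaY_Phi (hx : 0 < q.1) (h1 : 2 * Real.sqrt q.1 < 1) (hy : 0 < q.2) :
    thetaY (PhiF r) q = T2f r q := by
  have ht : (0:ℝ) < Real.sqrt q.2 := Real.sqrt_pos.2 hy
  show q.2 * (fderiv ℝ (PhiF r) q) (0,1) = _
  rw [(hasF_Phi r hx h1 hy).fderiv]
  simp only [lm_apply]
  norm_num
  unfold PA2 T2f
  field_simp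
  nth_rewrite 1 [(Real.mul_self_sqrt hy.le).symm]
  ring

end

lemma alg1 (r s t u W g e11 e12 e21 e22 pa1 pa2 t1 t2 phi : ℝ)
    (hs : 0 < s) (ht : 0 < t) (hu : 0 < u) (hu2 : u^2 = 1 - 2*s) (hg : g = u + t)
    (h_e11 : e11 = r * W * (g/(2*s*u) + g/(2*u^3) + (2*r+1)/(2*u^2)))
    (h_e12 : e12 = -(r*(2*r+1)*s*W/(2*t*u)))
    (h_e21 : e21 = -(r*(2*r+1)*t*W/(2*s*u)))
    (h_e22 : e22 = r*W*((2*r+1)/2 - g/(2*t)))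
    (h_pa1 : pa1 = r*(W*g)/(s*u))
    (h_pa2 : pa2 = -(r*(W*g)/t))
    (h_t1 : t1 = r*(s*u⁻¹*(W*g)))
    (h_t2 : t2 = -r*(t*(W*g)))
    (h_phi : phi = W*g^2) :
    s^2 * (1*e11 + 0*e21 + (-(1/2))*pa1)
      - s^2 * (2*(s^2*(2*e11+1*e21+(r+1)*pa1)) + 1*(t^2*(2*e12+1*e22+(r+1)*pa2))
        + r*(2*t1+1*t2+(r+1)*phi)) = 0 := by
  subst h_e11 h_e12 h_e21 h_e22 h_pa1 h_pa2 h_t1 h_t2 h_phi hg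
  have hs' : s = (1-u^2)/2 := by linarith
  subst hs'
  have hu1 : u^2 < 1 := by nlinarith
  have h3 : (1:ℝ) - u^2 ≠ 0 := by nlinarith
  have h4 : u - u^3 ≠ 0 := by
    have : u - u^3 = u * (1 - u^2) := by ring
    rw [this]; exact mul_ne_zero hu.ne' h3
  field_simp
  ring

lemma alg2 (r s t u W g e11 e12 e21 e22 pa1 pa2 t1 t2 phi : ℝ)
    (hs : 0 < s) (ht : 0 < t) (hu : 0 < u) (hu2 : u^2 = 1 - 2*s) (hg : g = u + t)
    (h_e11 : e11 = r * W * (g/(2*s*u) + g/(2*u^3) + (2*r+1)/(2*u^2)))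
    (h_e12 : e12 = -(r*(2*r+1)*s*W/(2*t*u)))
    (h_e21 : e21 = -(r*(2*r+1)*t*W/(2*s*u)))
    (h_e22 : e22 = r*W*((2*r+1)/2 - g/(2*t)))
    (h_pa1 : pa1 = r*(W*g)/(s*u))
    (h_pa2 : pa2 = -(r*(W*g)/t))
    (h_t1 : t1 = r*(s*u⁻¹*(W*g)))
    (h_t2 : t2 = -r*(t*(W*g)))
    (h_phi : phi = W*g^2) :
    t^2 * (0*e12 + 1*e22 + (-(1/2))*pa2)
      - t^2 * (2*(s^2*(0*e11+1*e21+(r+1/2)*pa1)) + 1*(t^2*(0*e12+1*e22+(r+1/2)*pa2))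
        + r*(0*t1+1*t2+(r+1/2)*phi)) = 0 := by
  subst h_e11 h_e12 h_e21 h_e22 h_pa1 h_pa2 h_t1 h_t2 h_phi hg
  have hs' : s = (1-u^2)/2 := by linarith
  subst hs'
  have hu1 : u^2 < 1 := by nlinarith
  have h3 : (1:ℝ) - u^2 ≠ 0 := by nlinarith
  have h4 : u - u^3 ≠ 0 := by
    have : u - u^3 = u * (1 - u^2) := by ring
    rw [this]; exact mul_ne_zero hu.ne' h3
  field_simp
  ring

/-- `Φ = f^r`, with `f(x,y) = (√(1 − 2√x) + √y)^(−2)`, satisfies both Horn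
equations of `H₄(r, r+1/2, 1/2, 1/2)` on `U = {x > 0, 2√x < 1, y > 0}`. -/
theorem stmt_13 (r : ℝ) (Φ : ℝ × ℝ → ℝ) (hΦ : Φ = fun p => fFun p ^ r) :
    ∀ p : ℝ × ℝ, 0 < p.1 → 2 * Real.sqrt p.1 < 1 → 0 < p.2 →
      thetaX (eulerOp 1 0 (-(1/2)) Φ) p
          - p.1 * eulerOp 2 1 r (eulerOp 2 1 (r + 1) Φ) p = 0 ∧
      thetaY (eulerOp 0 1 (-(1/2)) Φ) p
          - p.2 * eulerOp 2 1 r (eulerOp 0 1 (r + 1/2) Φ) p = 0 := by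
  subst hΦ
  have hPhiEq : (fun p : ℝ × ℝ => fFun p ^ r) = PhiF r := by
    funext q
    show (gF q ^ (-2:ℝ)) ^ r = gF q ^ (-2*r)
    rw [← Real.rpow_mul (by unfold gF; positivity)]
  rw [hPhiEq]
  intro p hx h1 hy
  have hs : (0:ℝ) < Real.sqrt p.1 := Real.sqrt_pos.2 hx
  have hu : (0:ℝ) < Real.sqrt (1 - 2 * Real.sqrt p.1) := Real.sqrt_pos.2 (by linarith)
  have ht : (0:ℝ) < Real.sqrt p.2 := Real.sqrt_pos.2 hy
  have hg := gF_pos hx h1 hy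
  -- the open set U
  have hUopen : IsOpen {q : ℝ × ℝ | 0 < q.1 ∧ 2 * Real.sqrt q.1 < 1 ∧ 0 < q.2} := by
    have : {q : ℝ × ℝ | 0 < q.1 ∧ 2 * Real.sqrt q.1 < 1 ∧ 0 < q.2} =
        {q : ℝ × ℝ | 0 < q.1} ∩ ({q : ℝ × ℝ | 2 * Real.sqrt q.1 < 1} ∩ {q : ℝ × ℝ | 0 < q.2}) :=
      rfl
    rw [this]
    exact (isOpen_lt continuous_const continuous_fst).inter
      ((isOpen_lt (continuous_const.mul (Real.continuous_sqrt.comp continuous_fst))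
        continuous_const).inter (isOpen_lt continuous_const continuous_snd))
  have hUmem : {q : ℝ × ℝ | 0 < q.1 ∧ 2 * Real.sqrt q.1 < 1 ∧ 0 < q.2} ∈ nhds p :=
    hUopen.mem_nhds ⟨hx, h1, hy⟩
  have hT1 := hasF_T1 r hx h1 hy
  have hT2 := hasF_T2 r hx h1 hy
  have hP := hasF_Phi r hx h1 hy
  -- eventual equalities
  have hev1 : eulerOp 1 0 (-(1/2)) (PhiF r) =ᶠ[nhds p]
      (fun q => 1 * T1f r q + 0 * T2f r q + (-(1/2)) * PhiF r q) := by
    filter_upwards [hUmem] with q hq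
    obtain ⟨hqx, hq1, hqy⟩ := hq
    show 1 * thetaX (PhiF r) q + 0 * thetaY (PhiF r) q + (-(1/2)) * PhiF r q = _
    rw [thetaX_Phi r hqx hq1 hqy, thetaY_Phi r hqx hq1 hqy]
  have hev2 : eulerOp 2 1 (r + 1) (PhiF r) =ᶠ[nhds p]
      (fun q => 2 * T1f r q + 1 * T2f r q + (r + 1) * PhiF r q) := by
    filter_upwards [hUmem] with q hq
    obtain ⟨hqx, hq1, hqy⟩ := hq
    show 2 * thetaX (PhiF r) q + 1 * thetaY (PhiF r) q + (r + 1) * PhiF r q = _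
    rw [thetaX_Phi r hqx hq1 hqy, thetaY_Phi r hqx hq1 hqy]
  have hev3 : eulerOp 0 1 (-(1/2)) (PhiF r) =ᶠ[nhds p]
      (fun q => 0 * T1f r q + 1 * T2f r q + (-(1/2)) * PhiF r q) := by
    filter_upwards [hUmem] with q hq
    obtain ⟨hqx, hq1, hqy⟩ := hq
    show 0 * thetaX (PhiF r) q + 1 * thetaY (PhiF r) q + (-(1/2)) * PhiF r q = _
    rw [thetaX_Phi r hqx hq1 hqy, thetaY_Phi r hqx hq1 hqy]
  have hev4 : eulerOp 0 1 (r + 1/2) (PhiF r) =ᶠ[nhds p]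
      (fun q => 0 * T1f r q + 1 * T2f r q + (r + 1/2) * PhiF r q) := by
    filter_upwards [hUmem] with q hq
    obtain ⟨hqx, hq1, hqy⟩ := hq
    show 0 * thetaX (PhiF r) q + 1 * thetaY (PhiF r) q + (r + 1/2) * PhiF r q = _
    rw [thetaX_Phi r hqx hq1 hqy, thetaY_Phi r hqx hq1 hqy]
  -- derivatives of the closed forms
  have hA : HasFDerivAt (fun q => 1 * T1f r q + 0 * T2f r q + (-(1/2)) * PhiF r q)
      ((1:ℝ) • lm (E11 r p) (E12 r p) + (0:ℝ) • lm (E21 r p) (E22 r p)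
        + (-(1/2):ℝ) • lm (PA1 r p) (PA2 r p)) p :=
    ((hT1.const_mul 1).add (hT2.const_mul 0)).add (hP.const_mul (-(1/2)))
  have hB : HasFDerivAt (fun q => 2 * T1f r q + 1 * T2f r q + (r + 1) * PhiF r q)
      ((2:ℝ) • lm (E11 r p) (E12 r p) + (1:ℝ) • lm (E21 r p) (E22 r p)
        + ((r+1):ℝ) • lm (PA1 r p) (PA2 r p)) p :=
    ((hT1.const_mul 2).add (hT2.const_mul 1)).add (hP.const_mul (r+1))
  have hC : HasFDerivAt (fun q => 0 * T1f r q + 1 * T2f r q + (-(1/2)) * PhiF r q)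
      ((0:ℝ) • lm (E11 r p) (E12 r p) + (1:ℝ) • lm (E21 r p) (E22 r p)
        + (-(1/2):ℝ) • lm (PA1 r p) (PA2 r p)) p :=
    ((hT1.const_mul 0).add (hT2.const_mul 1)).add (hP.const_mul (-(1/2)))
  have hD : HasFDerivAt (fun q => 0 * T1f r q + 1 * T2f r q + (r + 1/2) * PhiF r q)
      ((0:ℝ) • lm (E11 r p) (E12 r p) + (1:ℝ) • lm (E21 r p) (E22 r p)
        + ((r+1/2):ℝ) • lm (PA1 r p) (PA2 r p)) p :=
    ((hT1.const_mul 0).add (hT2.const_mul 1)).add (hP.const_mul (r+1/2))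
  -- values
  have v1 : thetaX (eulerOp 1 0 (-(1/2)) (PhiF r)) p
      = p.1 * (1 * E11 r p + 0 * E21 r p + (-(1/2)) * PA1 r p) := by
    show p.1 * (fderiv ℝ (eulerOp 1 0 (-(1/2)) (PhiF r)) p) (1,0) = _
    rw [hev1.fderiv_eq, hA.fderiv]
    simp only [ContinuousLinearMap.add_apply, ContinuousLinearMap.smul_apply, lm_apply,
      smul_eq_mul]
    try norm_num
  have v2 : thetaX (eulerOp 2 1 (r + 1) (PhiF r)) p
      = p.1 * (2 * E11 r p + 1 * E21 r p + (r + 1) * PA1 r p) := by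
    show p.1 * (fderiv ℝ (eulerOp 2 1 (r + 1) (PhiF r)) p) (1,0) = _
    rw [hev2.fderiv_eq, hB.fderiv]
    simp only [ContinuousLinearMap.add_apply, ContinuousLinearMap.smul_apply, lm_apply,
      smul_eq_mul]
    try norm_num
  have v3 : thetaY (eulerOp 2 1 (r + 1) (PhiF r)) p
      = p.2 * (2 * E12 r p + 1 * E22 r p + (r + 1) * PA2 r p) := by
    show p.2 * (fderiv ℝ (eulerOp 2 1 (r + 1) (PhiF r)) p) (0,1) = _
    rw [hev2.fderiv_eq, hB.fderiv]
    simp only [ContinuousLinearMap.add_apply, ContinuousLinearMap.smul_apply, lm_apply,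
      smul_eq_mul]
    try norm_num
  have v4 : eulerOp 2 1 (r + 1) (PhiF r) p = 2 * T1f r p + 1 * T2f r p + (r + 1) * PhiF r p := by
    show 2 * thetaX (PhiF r) p + 1 * thetaY (PhiF r) p + (r + 1) * PhiF r p = _
    rw [thetaX_Phi r hx h1 hy, thetaY_Phi r hx h1 hy]
  have v5 : thetaX (eulerOp 0 1 (r + 1/2) (PhiF r)) p
      = p.1 * (0 * E11 r p + 1 * E21 r p + (r + 1/2) * PA1 r p) := by
    show p.1 * (fderiv ℝ (eulerOp 0 1 (r + 1/2) (PhiF r)) p) (1,0) = _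
    rw [hev4.fderiv_eq, hD.fderiv]
    simp only [ContinuousLinearMap.add_apply, ContinuousLinearMap.smul_apply, lm_apply,
      smul_eq_mul]
    try norm_num
  have v6 : thetaY (eulerOp 0 1 (r + 1/2) (PhiF r)) p
      = p.2 * (0 * E12 r p + 1 * E22 r p + (r + 1/2) * PA2 r p) := by
    show p.2 * (fderiv ℝ (eulerOp 0 1 (r + 1/2) (PhiF r)) p) (0,1) = _
    rw [hev4.fderiv_eq, hD.fderiv]
    simp only [ContinuousLinearMap.add_apply, ContinuousLinearMap.smul_apply, lm_apply,
      smul_eq_mul]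
    try norm_num
  have v7 : eulerOp 0 1 (r + 1/2) (PhiF r) p
      = 0 * T1f r p + 1 * T2f r p + (r + 1/2) * PhiF r p := by
    show 0 * thetaX (PhiF r) p + 1 * thetaY (PhiF r) p + (r + 1/2) * PhiF r p = _
    rw [thetaX_Phi r hx h1 hy, thetaY_Phi r hx h1 hy]
  have v8 : thetaY (eulerOp 0 1 (-(1/2)) (PhiF r)) p
      = p.2 * (0 * E12 r p + 1 * E22 r p + (-(1/2)) * PA2 r p) := by
    show p.2 * (fderiv ℝ (eulerOp 0 1 (-(1/2)) (PhiF r)) p) (0,1) = _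
    rw [hev3.fderiv_eq, hC.fderiv]
    simp only [ContinuousLinearMap.add_apply, ContinuousLinearMap.smul_apply, lm_apply,
      smul_eq_mul]
    try norm_num
  -- power rewrites
  have eg1 : gF p ^ (-2*r-1) = gF p ^ (-2*r-2) * gF p := by
    rw [show (-2*r-1) = (-2*r-2) + 1 by ring, Real.rpow_add hg, Real.rpow_one]
  have eg0 : gF p ^ (-2*r) = gF p ^ (-2*r-2) * gF p ^ 2 := by
    rw [show (-2*r) = (-2*r-2) + 2 by ring, Real.rpow_add hg]
    norm_num [Real.rpow_natCast]
  have hu2 : (Real.sqrt (1 - 2 * Real.sqrt p.1))^2 = 1 - 2 * Real.sqrt p.1 :=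
    Real.sq_sqrt (by linarith)
  have hp1 : p.1 = Real.sqrt p.1 ^ 2 := (Real.sq_sqrt hx.le).symm
  have hp2 : p.2 = Real.sqrt p.2 ^ 2 := (Real.sq_sqrt hy.le).symm
  constructor
  · rw [show eulerOp 2 1 r (eulerOp 2 1 (r + 1) (PhiF r)) p
        = 2 * thetaX (eulerOp 2 1 (r + 1) (PhiF r)) p
          + 1 * thetaY (eulerOp 2 1 (r + 1) (PhiF r)) p
          + r * (eulerOp 2 1 (r + 1) (PhiF r)) p from rfl,
      v1, v2, v3, v4, hp1, hp2]
    exact alg1 r (Real.sqrt p.1) (Real.sqrt p.2) (Real.sqrt (1 - 2 * Real.sqrt p.1))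
      (gF p ^ (-2*r-2)) (gF p) (E11 r p) (E12 r p) (E21 r p) (E22 r p) (PA1 r p) (PA2 r p)
      (T1f r p) (T2f r p) (PhiF r p) hs ht hu hu2 rfl rfl rfl rfl rfl
      (by unfold PA1; rw [eg1])
      (by unfold PA2; rw [eg1])
      (by unfold T1f; rw [eg1, Real.rpow_neg_one])
      (by unfold T2f; rw [eg1])
      (by unfold PhiF; rw [eg0])
  · rw [show eulerOp 2 1 r (eulerOp 0 1 (r + 1/2) (PhiF r)) p
        = 2 * thetaX (eulerOp 0 1 (r + 1/2) (PhiF r)) p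
          + 1 * thetaY (eulerOp 0 1 (r + 1/2) (PhiF r)) p
          + r * (eulerOp 0 1 (r + 1/2) (PhiF r)) p from rfl,
      v8, v5, v6, v7, hp1, hp2]
    exact alg2 r (Real.sqrt p.1) (Real.sqrt p.2) (Real.sqrt (1 - 2 * Real.sqrt p.1))
      (gF p ^ (-2*r-2)) (gF p) (E11 r p) (E12 r p) (E21 r p) (E22 r p) (PA1 r p) (PA2 r p)
      (T1f r p) (T2f r p) (PhiF r p) hs ht hu hu2 rfl rfl rfl rfl rfl
      (by unfold PA1; rw [eg1])
      (by unfold PA2; rw [eg1])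
      (by unfold T1f; rw [eg1, Real.rpow_neg_one])
      (by unfold T2f; rw [eg1])
      (by unfold PhiF; rw [eg0])
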